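/- Let ‖·‖ be a norm on ℝ^n and let E = { ξ ∈ ℝ^n : ‖ξ‖ = 1 } be its unit sphere, regarded as a subset of ℂ^n. Then ‖ζ‖_c ≤ Ψ_E(ζ) for every ζ ∈ ℂ^n, and ‖ζ‖_c = Ψ_E(ζ) for every ζ ∈ ℂℝ^n = { zξ : z ∈ ℂ, ξ ∈ ℝ^n }, where ‖·‖_c is the cross norm on ℂ^n associated to ‖·‖. -/

import Mathlib

open scoped ENNReal RealInnerProductSpace BigOperators
open Filter MeasureTheory

noncomputable section

/-- ℂⁿ with the hermitian (euclidean) norm. -/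
abbrev Cn (n : ℕ) := EuclideanSpace ℂ (Fin n)
/-- ℝⁿ with the euclidean norm. -/
abbrev Rn (n : ℕ) := EuclideanSpace ℝ (Fin n)

/-- The inclusion ℝⁿ ⊆ ℂⁿ. -/
def toCn {n : ℕ} (x : Rn n) : Cn n := WithLp.toLp 2 (fun i => (x i : ℂ))

/-- Evaluation of a polynomial on ℂⁿ at a point of ℂⁿ. -/
def evalP {n : ℕ} (p : MvPolynomial (Fin n) ℂ) (ζ : Cn n) : ℂ :=
  MvPolynomial.eval (fun i => ζ i) p

/-- Siciak's homogeneous extremal function with weight `γ`: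
`Ψ_{E,γ}(ζ) = sup{ |p(ζ)|^{1/k} : p homogeneous of degree k ≥ 1, |p|^{1/k} ≤ γ on E }`. -/
def siciak {n : ℕ} (E : Set (Cn n)) (γ : Cn n → ℝ) (ζ : Cn n) : ℝ≥0∞ :=
  ⨆ (p : MvPolynomial (Fin n) ℂ) (k : ℕ) (_ : p.IsHomogeneous k) (_ : 1 ≤ k)
    (_ : ∀ ξ ∈ E, ‖evalP p ξ‖ ^ (1 / (k : ℝ)) ≤ γ ξ),
    ENNReal.ofReal (‖evalP p ζ‖ ^ (1 / (k : ℝ)))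

/-- The upper semicontinuous regularization `Ψ^*(ζ) = limsup_{ϑ → ζ} Ψ(ϑ)`. -/
def siciakStar {n : ℕ} (E : Set (Cn n)) (γ : Cn n → ℝ) (ζ : Cn n) : ℝ≥0∞ :=
  Filter.limsup (siciak E γ) (nhds ζ)

/-- `E` has positive homogeneous capacity in the sense of Siciak:
`Ψ_E^*` is bounded above on the unit sphere of ℂⁿ. -/
def PosHomCapacity {n : ℕ} (E : Set (Cn n)) : Prop :=
  ∃ M : ℝ, ∀ ζ : Cn n, ‖ζ‖ = 1 → siciakStar E (fun _ => 1) ζ ≤ ENNReal.ofReal M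

end

noncomputable section

/-- The cross norm on ℂⁿ associated to a norm `ν` on ℝⁿ. -/
def crossNorm {n : ℕ} (ν : Rn n → ℝ) (ζ : Cn n) : ℝ :=
  sInf { s : ℝ | ∃ (N : ℕ) (α : Fin N → ℂ) (ω : Fin N → Rn n),
    ζ = ∑ j, α j • toCn (ω j) ∧ s = ∑ j, ‖α j‖ * ν (ω j) }

namespace SiciakAux

variable {n : ℕ} {ν : Rn n → ℝ}

/-- The set of values of representations of `ζ`. -/
def crep (ν : Rn n → ℝ) (ζ : Cn n) : Set ℝ :=
  { s : ℝ | ∃ (N : ℕ) (α : Fin N → ℂ) (ω : Fin N → Rn n),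
    ζ = ∑ j, α j • toCn (ω j) ∧ s = ∑ j, ‖α j‖ * ν (ω j) }

lemma crossNorm_eq (ζ : Cn n) : crossNorm ν ζ = sInf (crep ν ζ) := rfl

lemma real_smul_eq (c : ℝ) (v : Cn n) : c • v = (c : ℂ) • v := by
  rw [← one_smul ℂ v, ← smul_assoc]; norm_num

lemma toCn_smul (c : ℝ) (x : Rn n) : toCn (c • x) = (c : ℂ) • toCn x := by
  ext i; simp [toCn]

lemma toCn_zero : toCn (0 : Rn n) = 0 := by
  ext i; simp [toCn]

section nu
variable (hν1 : ∀ (c : ℝ) (x : Rn n), ν (c • x) = |c| * ν x)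
    (hν2 : ∀ x y : Rn n, ν (x + y) ≤ ν x + ν y)

include hν1 in
lemma nu_zero : ν 0 = 0 := by
  have := hν1 0 0; simpa using this

include hν1 hν2 in
lemma nu_nonneg (x : Rn n) : 0 ≤ ν x := by
  have h1 : ν (-x) = ν x := by
    have := hν1 (-1) x; simpa using this
  have h2 : ν 0 ≤ ν x + ν (-x) := by
    have := hν2 x (-x); simpa using this
  rw [nu_zero hν1, h1] at h2; linarith

lemma crep_nonempty (ζ : Cn n) : (crep ν ζ).Nonempty := by
  refine ⟨_, n, (fun i => ζ i), (fun i => EuclideanSpace.single i (1:ℝ)), ?_, rfl⟩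
  ext i
  rw [WithLp.ofLp_sum, Finset.sum_apply]
  have : ∀ j : Fin n, (ζ j • toCn (EuclideanSpace.single j (1:ℝ))) i
      = if i = j then ζ j else 0 := by
    intro j
    show ζ j * ((EuclideanSpace.single j (1:ℝ)) i : ℂ) = _
    rw [EuclideanSpace.single_apply]
    by_cases h : i = j <;> simp [h]
  rw [Finset.sum_congr rfl (fun j _ => this j)]
  simp

include hν1 hν2 in
lemma crep_bddBelow (ζ : Cn n) : BddBelow (crep ν ζ) := by
  refine ⟨0, ?_⟩
  rintro s ⟨N, α, ω, -, rfl⟩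
  exact Finset.sum_nonneg fun j _ =>
    mul_nonneg (norm_nonneg _) (nu_nonneg hν1 hν2 _)

include hν1 hν2 in
lemma crossNorm_nonneg (ζ : Cn n) : 0 ≤ crossNorm ν ζ :=
  le_csInf (crep_nonempty ζ) (by
    rintro s ⟨N, α, ω, -, rfl⟩
    exact Finset.sum_nonneg fun j _ =>
      mul_nonneg (norm_nonneg _) (nu_nonneg hν1 hν2 _))

include hν1 hν2 in
lemma crossNorm_le_rep {ζ : Cn n} {s : ℝ} (hs : s ∈ crep ν ζ) : crossNorm ν ζ ≤ s :=
  csInf_le (crep_bddBelow hν1 hν2 ζ) hs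

include hν1 hν2 in
lemma crossNorm_smul_toCn_le (z : ℂ) (x : Rn n) :
    crossNorm ν (z • toCn x) ≤ ‖z‖ * ν x := by
  refine crossNorm_le_rep hν1 hν2 ⟨1, (fun _ => z), (fun _ => x), ?_, ?_⟩ <;> simp

include hν1 hν2 in
lemma crossNorm_toCn_le (x : Rn n) : crossNorm ν (toCn x) ≤ ν x := by
  have := crossNorm_smul_toCn_le hν1 hν2 1 x
  simpa using this

include hν1 hν2 in
lemma crossNorm_zero : crossNorm ν 0 = 0 := by
  refine le_antisymm ?_ (crossNorm_nonneg hν1 hν2 0)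
  have := crossNorm_smul_toCn_le hν1 hν2 0 0
  simpa using this

include hν1 hν2 in
lemma crossNorm_smul_le (z : ℂ) (ζ : Cn n) :
    crossNorm ν (z • ζ) ≤ ‖z‖ * crossNorm ν ζ := by
  rcases eq_or_ne z 0 with rfl | hz
  · simp [crossNorm_zero hν1 hν2]
  have hz' : (0:ℝ) < ‖z‖ := by
    simpa [norm_pos_iff] using hz
  rw [mul_comm, ← div_le_iff₀ hz', crossNorm_eq (ν := ν) ζ]
  refine le_csInf (crep_nonempty ζ) ?_
  rintro s ⟨N, α, ω, rfl, rfl⟩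
  rw [div_le_iff₀ hz', mul_comm]
  refine crossNorm_le_rep hν1 hν2 ⟨N, (fun j => z * α j), ω, ?_, ?_⟩
  · rw [Finset.smul_sum]; simp [smul_smul]
  · rw [Finset.mul_sum]; simp [mul_assoc]

include hν1 hν2 in
lemma crossNorm_smul (z : ℂ) (ζ : Cn n) :
    crossNorm ν (z • ζ) = ‖z‖ * crossNorm ν ζ := by
  rcases eq_or_ne z 0 with rfl | hz
  · simp [crossNorm_zero hν1 hν2]
  refine le_antisymm (crossNorm_smul_le hν1 hν2 z ζ) ?_
  have h := crossNorm_smul_le hν1 hν2 z⁻¹ (z • ζ)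
  rw [smul_smul, inv_mul_cancel₀ hz, one_smul, norm_inv] at h
  have hz' : (0:ℝ) < ‖z‖ := by
    simpa [norm_pos_iff] using hz
  calc ‖z‖ * crossNorm ν ζ
      ≤ ‖z‖ * ((‖z‖)⁻¹ * crossNorm ν (z • ζ)) := by
        exact mul_le_mul_of_nonneg_left h hz'.le
    _ = crossNorm ν (z • ζ) := by field_simp

include hν1 hν2 in
lemma crossNorm_add_le (ζ ϑ : Cn n) :
    crossNorm ν (ζ + ϑ) ≤ crossNorm ν ζ + crossNorm ν ϑ := by
  have key : ∀ s ∈ crep ν ζ, ∀ t ∈ crep ν ϑ, crossNorm ν (ζ + ϑ) ≤ s + t := by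
    rintro s ⟨N, α, ω, rfl, rfl⟩ t ⟨M, β, τ, rfl, rfl⟩
    refine crossNorm_le_rep hν1 hν2
      ⟨N + M, Fin.addCases α β, Fin.addCases ω τ, ?_, ?_⟩
    · rw [Fin.sum_univ_add]
      simp
    · rw [Fin.sum_univ_add]
      simp
  rw [crossNorm_eq (ν := ν) ζ, crossNorm_eq (ν := ν) ϑ]
  have h1 : ∀ s ∈ crep ν ζ, crossNorm ν (ζ + ϑ) - s ≤ sInf (crep ν ϑ) := by
    intro s hs
    refine le_csInf (crep_nonempty ϑ) fun t ht => ?_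
    linarith [key s hs t ht]
  have h2 : crossNorm ν (ζ + ϑ) - sInf (crep ν ϑ) ≤ sInf (crep ν ζ) := by
    refine le_csInf (crep_nonempty ζ) fun s hs => ?_
    linarith [h1 s hs]
  linarith

omit hν1 hν2 in
lemma abs_linear_le (b : Fin n → ℂ)
    (hb : ∀ ω : Rn n, ‖∑ i, b i * ((ω i : ℝ) : ℂ)‖ ≤ ν ω)
    (ζ : Cn n) : ‖∑ i, b i * ζ i‖ ≤ crossNorm ν ζ := by
  refine le_csInf (crep_nonempty ζ) ?_
  rintro s ⟨N, α, ω, rfl, rfl⟩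
  have h1 : ∀ i : Fin n, (∑ j, α j • toCn (ω j)) i = ∑ j, α j * ((ω j i : ℝ) : ℂ) := by
    intro i; rw [WithLp.ofLp_sum, Finset.sum_apply]; rfl
  calc ‖∑ i, b i * (∑ j, α j • toCn (ω j)) i‖
      = ‖∑ j, α j * ∑ i, b i * ((ω j i : ℝ) : ℂ)‖ := by
        rw [show (∑ i, b i * (∑ j, α j • toCn (ω j)) i)
            = ∑ j, α j * ∑ i, b i * ((ω j i : ℝ) : ℂ) from by
          simp_rw [h1, Finset.mul_sum]
          rw [Finset.sum_comm]
          refine Finset.sum_congr rfl fun j _ => Finset.sum_congr rfl fun i _ => by ring]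
    _ ≤ ∑ j, ‖α j * ∑ i, b i * ((ω j i : ℝ) : ℂ)‖ :=
        norm_sum_le _ _
    _ ≤ ∑ j, ‖α j‖ * ν (ω j) := by
        refine Finset.sum_le_sum fun j _ => ?_
        rw [norm_mul]
        exact mul_le_mul_of_nonneg_left (hb (ω j)) (norm_nonneg _)

include hν1 hν2 in
lemma exists_u (ζ : Cn n) :
    ∃ u : Cn n →ₗ[ℝ] ℝ, (∀ v, u v ≤ crossNorm ν v) ∧ u ζ = crossNorm ν ζ := by
  rcases eq_or_ne ζ 0 with rfl | hζ
  · exact ⟨0, fun v => crossNorm_nonneg hν1 hν2 v, by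
      simp [crossNorm_zero hν1 hν2]⟩
  obtain ⟨g, hg1, hg2⟩ := exists_extension_of_le_sublinear
      (LinearPMap.mkSpanSingleton (K := ℝ) ζ (crossNorm ν ζ) hζ) (crossNorm ν)
      (fun c hc x => by
        rw [real_smul_eq, crossNorm_smul hν1 hν2, Complex.norm_real, Real.norm_eq_abs,
          abs_of_pos hc])
      (crossNorm_add_le hν1 hν2)
      (by
        rintro ⟨x, hx⟩
        obtain ⟨c, rfl⟩ := Submodule.mem_span_singleton.mp hx
        rw [LinearPMap.mkSpanSingleton'_apply]
        show c • crossNorm ν ζ ≤ crossNorm ν (c • ζ)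
        rw [real_smul_eq, crossNorm_smul hν1 hν2, Complex.norm_real, Real.norm_eq_abs]
        calc c • crossNorm ν ζ = c * crossNorm ν ζ := rfl
          _ ≤ |c| * crossNorm ν ζ :=
            mul_le_mul_of_nonneg_right (le_abs_self c) (crossNorm_nonneg hν1 hν2 ζ))
  refine ⟨g, hg2, ?_⟩
  have := hg1 ⟨ζ, Submodule.mem_span_singleton_self ζ⟩
  rw [this, LinearPMap.mkSpanSingleton_apply]

end nu

/-- Homogeneous polynomials satisfy `p(c•x) = c^k p(x)`. -/
lemma eval_smul_homog {p : MvPolynomial (Fin n) ℂ} {k : ℕ} (hp : p.IsHomogeneous k)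
    (c : ℂ) (x : Fin n → ℂ) :
    MvPolynomial.eval (fun i => c * x i) p = c ^ k * MvPolynomial.eval x p := by
  rw [MvPolynomial.eval_eq', MvPolynomial.eval_eq', Finset.mul_sum]
  refine Finset.sum_congr rfl fun d hd => ?_
  have hdeg : d.degree = k := by
    by_contra h
    exact (MvPolynomial.mem_support_iff.mp hd) (hp.coeff_eq_zero h)
  have hsum : ∑ i, d i = k := by
    rw [← hdeg, Finsupp.degree]
    exact (Finset.sum_subset (Finset.subset_univ _)
      (fun x _ hx => Finsupp.notMem_support_iff.mp hx)).symm
  have : ∏ i, (c * x i) ^ d i = c ^ k * ∏ i, x i ^ d i := by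
    simp_rw [mul_pow]
    rw [Finset.prod_mul_distrib, Finset.prod_pow_eq_pow_sum, hsum]
  rw [this]; ring

lemma evalP_smul {p : MvPolynomial (Fin n) ℂ} {k : ℕ} (hp : p.IsHomogeneous k)
    (c : ℂ) (v : Cn n) : evalP p (c • v) = c ^ k * evalP p v := by
  have : (fun i => (c • v) i) = fun i => c * v i := rfl
  rw [evalP, this, eval_smul_homog hp, evalP]

/-- The linear polynomial `∑ bᵢ Xᵢ`. -/
def linP (b : Fin n → ℂ) : MvPolynomial (Fin n) ℂ :=
  ∑ i, MvPolynomial.C (b i) * MvPolynomial.X i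

lemma linP_homog (b : Fin n → ℂ) : (linP b).IsHomogeneous 1 :=
  MvPolynomial.IsHomogeneous.sum _ _ _ fun i _ => MvPolynomial.isHomogeneous_C_mul_X _ i

lemma evalP_linP (b : Fin n → ℂ) (v : Cn n) : evalP (linP b) v = ∑ i, b i * v i := by
  simp [evalP, linP]

def ecn (i : Fin n) : Cn n := EuclideanSpace.single i (1 : ℂ)

/-- Coefficients of the complexification of a real-linear functional on ℂⁿ. -/
def bfun (u : Cn n →ₗ[ℝ] ℝ) (i : Fin n) : ℂ :=
  (u (ecn i) : ℂ) - Complex.I * (u (Complex.I • ecn i) : ℂ)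

lemma decomp (v : Cn n) :
    v = ∑ i, (((v i).re • ecn i) + ((v i).im • (Complex.I • ecn i))) := by
  ext i
  rw [WithLp.ofLp_sum, Finset.sum_apply]
  have : ∀ j : Fin n, (((v j).re • ecn j) + ((v j).im • (Complex.I • ecn j))) i
      = if i = j then v j else 0 := by
    intro j
    show (v j).re • (ecn j i) + (v j).im • (Complex.I * ecn j i) = _
    unfold ecn
    rw [EuclideanSpace.single_apply]
    by_cases h : i = j
    · rw [if_pos h, if_pos h]
      simp only [mul_one, Complex.real_smul]
      exact Complex.re_add_im _
    · simp [h]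
  rw [Finset.sum_congr rfl (fun j _ => this j)]
  simp

lemma u_apply (u : Cn n →ₗ[ℝ] ℝ) (v : Cn n) :
    u v = ∑ i, ((v i).re * u (ecn i) + (v i).im * u (Complex.I • ecn i)) := by
  conv_lhs => rw [decomp v]
  rw [map_sum]
  refine Finset.sum_congr rfl fun i _ => ?_
  rw [map_add, u.map_smul, u.map_smul]; rfl

lemma key (u : Cn n →ₗ[ℝ] ℝ) (v : Cn n) :
    ∑ i, bfun u i * v i = (u v : ℂ) - Complex.I * (u (Complex.I • v) : ℂ) := by
  have hIv : ∀ i, (Complex.I • v) i = Complex.I * v i := fun _ => rfl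
  have hre : ∀ i, ((Complex.I • v) i).re = -((v i).im) := fun i => by
    rw [hIv i]; simp
  have him : ∀ i, ((Complex.I • v) i).im = (v i).re := fun i => by
    rw [hIv i]; simp
  rw [u_apply u v, u_apply u (Complex.I • v)]
  simp_rw [hre, him]
  push_cast
  rw [Finset.mul_sum, ← Finset.sum_sub_distrib]
  refine Finset.sum_congr rfl fun i _ => ?_
  rw [bfun]
  obtain ⟨a, b⟩ := v i
  apply Complex.ext <;> simp [Complex.ext_iff] <;> ring

lemma key_re (u : Cn n →ₗ[ℝ] ℝ) (v : Cn n) :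
    (∑ i, bfun u i * v i).re = u v := by
  rw [key]; simp

lemma key_smul (u : Cn n →ₗ[ℝ] ℝ) (c : ℂ) (v : Cn n) :
    ∑ i, bfun u i * (c • v) i = c * ∑ i, bfun u i * v i := by
  rw [Finset.mul_sum]
  exact Finset.sum_congr rfl fun i _ => by
    show bfun u i * (c * v i) = _; ring

lemma abs_key_le (hν1 : ∀ (c : ℝ) (x : Rn n), ν (c • x) = |c| * ν x)
    (hν2 : ∀ x y : Rn n, ν (x + y) ≤ ν x + ν y)
    {u : Cn n →ₗ[ℝ] ℝ} (hu : ∀ w, u w ≤ crossNorm ν w) (v : Cn n) :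
    ‖∑ i, bfun u i * v i‖ ≤ crossNorm ν v := by
  set z := ∑ i, bfun u i * v i with hz
  rcases eq_or_ne z 0 with h0 | h0
  · rw [h0]; simpa using crossNorm_nonneg hν1 hν2 v
  have habs : (0:ℝ) < ‖z‖ := by simpa [norm_pos_iff] using h0
  set c : ℂ := (‖z‖ : ℂ) / z with hc
  have hcz : c * z = (‖z‖ : ℂ) := by
    rw [hc, div_mul_cancel₀ _ h0]
  have hcabs : ‖c‖ = 1 := by
    rw [hc, norm_div, Complex.norm_real, Real.norm_eq_abs, abs_of_pos habs, div_self habs.ne']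
  have h1 : ‖z‖ = u (c • v) := by
    have hsm := key_smul u c v
    rw [← hz] at hsm
    have h2 : (∑ i, bfun u i * (c • v) i).re = u (c • v) := key_re u (c • v)
    rw [hsm, hcz] at h2
    simpa using h2
  rw [h1]
  calc u (c • v) ≤ crossNorm ν (c • v) := hu _
    _ = crossNorm ν v := by rw [crossNorm_smul hν1 hν2, hcabs, one_mul]

lemma exists_u0 (hν1 : ∀ (c : ℝ) (x : Rn n), ν (c • x) = |c| * ν x)
    (hν2 : ∀ x y : Rn n, ν (x + y) ≤ ν x + ν y) (x : Rn n) :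
    ∃ u0 : Rn n →ₗ[ℝ] ℝ, (∀ w, u0 w ≤ ν w) ∧ u0 x = ν x := by
  rcases eq_or_ne x 0 with rfl | hx
  · exact ⟨0, fun w => nu_nonneg hν1 hν2 w, by simp [nu_zero hν1]⟩
  obtain ⟨g, hg1, hg2⟩ := exists_extension_of_le_sublinear
      (LinearPMap.mkSpanSingleton (K := ℝ) x (ν x) hx) ν
      (fun c hc w => by rw [hν1, abs_of_pos hc])
      hν2
      (by
        rintro ⟨w, hw⟩
        obtain ⟨c, rfl⟩ := Submodule.mem_span_singleton.mp hw
        rw [LinearPMap.mkSpanSingleton'_apply]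
        show c • ν x ≤ ν (c • x)
        rw [hν1]
        calc c • ν x = c * ν x := rfl
          _ ≤ |c| * ν x :=
            mul_le_mul_of_nonneg_right (le_abs_self c) (nu_nonneg hν1 hν2 x))
  refine ⟨g, hg2, ?_⟩
  have := hg1 ⟨x, Submodule.mem_span_singleton_self x⟩
  rw [this, LinearPMap.mkSpanSingleton_apply]

lemma rn_decomp (ω : Rn n) : ω = ∑ i, ω i • (EuclideanSpace.single i (1:ℝ)) := by
  ext i
  rw [WithLp.ofLp_sum, Finset.sum_apply]
  have : ∀ j : Fin n, (ω j • (EuclideanSpace.single j (1:ℝ))) i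
      = if i = j then ω j else 0 := by
    intro j
    show ω j * (EuclideanSpace.single j (1:ℝ)) i = _
    rw [EuclideanSpace.single_apply]
    by_cases h : i = j <;> simp [h]
  rw [Finset.sum_congr rfl (fun j _ => this j)]
  simp

lemma u0_apply (u0 : Rn n →ₗ[ℝ] ℝ) (ω : Rn n) :
    u0 ω = ∑ i, ω i * u0 (EuclideanSpace.single i (1:ℝ)) := by
  conv_lhs => rw [rn_decomp ω]
  rw [map_sum]
  exact Finset.sum_congr rfl fun i _ => by rw [u0.map_smul]; rfl

lemma crossNorm_lower (hν1 : ∀ (c : ℝ) (x : Rn n), ν (c • x) = |c| * ν x)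
    (hν2 : ∀ x y : Rn n, ν (x + y) ≤ ν x + ν y) (z : ℂ) (x : Rn n) :
    ‖z‖ * ν x ≤ crossNorm ν (z • toCn x) := by
  obtain ⟨u0, hu0, hu0x⟩ := exists_u0 hν1 hν2 x
  set b0 : Fin n → ℂ := fun i => (u0 (EuclideanSpace.single i (1:ℝ)) : ℂ) with hb0
  have hsum : ∀ ω : Rn n, ∑ i, b0 i * ((ω i : ℝ) : ℂ) = (u0 ω : ℂ) := by
    intro ω
    rw [u0_apply u0 ω]
    push_cast
    exact Finset.sum_congr rfl fun i _ => by rw [hb0]; ring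
  have hb : ∀ ω : Rn n, ‖∑ i, b0 i * ((ω i : ℝ) : ℂ)‖ ≤ ν ω := by
    intro ω
    rw [hsum ω, Complex.norm_real, Real.norm_eq_abs]
    rcases abs_cases (u0 ω) with ⟨h, _⟩ | ⟨h, _⟩
    · rw [h]; exact hu0 ω
    · rw [h]
      have h2 := hu0 (-ω)
      have h3 : ν (-ω) = ν ω := by
        have := hν1 (-1) ω; simpa using this
      rw [map_neg, h3] at h2
      linarith
  have hmain := abs_linear_le b0 hb (z • toCn x)
  have hval : ∑ i, b0 i * (z • toCn x) i = z * (u0 x : ℂ) := by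
    rw [← hsum x, Finset.mul_sum]
    exact Finset.sum_congr rfl fun i _ => by
      show b0 i * (z * (x i : ℂ)) = _; ring
  rw [hval, norm_mul, Complex.norm_real, Real.norm_eq_abs, hu0x,
    abs_of_nonneg (nu_nonneg hν1 hν2 x)] at hmain
  exact hmain

end SiciakAux

open SiciakAux

/-- Proposition 2.5 (Siciak, Drużkowski): if `E` is the unit sphere of a norm `ν` on ℝⁿ,
then `ν_c ≤ Ψ_E` on ℂⁿ with equality on `ℂℝⁿ`. -/
theorem siciak_of_real_unit_sphere {n : ℕ} (ν : Rn n → ℝ)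
    (hν1 : ∀ (c : ℝ) (x : Rn n), ν (c • x) = |c| * ν x)
    (hν2 : ∀ x y : Rn n, ν (x + y) ≤ ν x + ν y)
    (hν3 : ∀ x : Rn n, ν x = 0 → x = 0) :
    (∀ ζ : Cn n,
      ENNReal.ofReal (crossNorm ν ζ) ≤
        siciak (toCn '' {x : Rn n | ν x = 1}) (fun _ => 1) ζ) ∧
    (∀ ζ : Cn n, (∃ (z : ℂ) (x : Rn n), ζ = z • toCn x) →
      ENNReal.ofReal (crossNorm ν ζ) =
        siciak (toCn '' {x : Rn n | ν x = 1}) (fun _ => 1) ζ) := by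
  have claim1 : ∀ ζ : Cn n,
      ENNReal.ofReal (crossNorm ν ζ) ≤
        siciak (toCn '' {x : Rn n | ν x = 1}) (fun _ => 1) ζ := by
    intro ζ
    obtain ⟨u, hu, huζ⟩ := exists_u hν1 hν2 ζ
    set P := linP (bfun u) with hP
    have hbd : ∀ ξ ∈ toCn '' {x : Rn n | ν x = 1},
        ‖evalP P ξ‖ ^ (1 / ((1:ℕ) : ℝ)) ≤ (fun _ : Cn n => (1:ℝ)) ξ := by
      rintro ξ ⟨x, hx, rfl⟩
      show ‖evalP P (toCn x)‖ ^ (1 / ((1:ℕ) : ℝ)) ≤ 1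
      rw [show (1 / ((1:ℕ) : ℝ)) = 1 by norm_num, Real.rpow_one, hP, evalP_linP]
      calc ‖∑ i, bfun u i * (toCn x) i‖ ≤ crossNorm ν (toCn x) :=
            abs_key_le hν1 hν2 hu (toCn x)
        _ ≤ ν x := crossNorm_toCn_le hν1 hν2 x
        _ = 1 := hx
    have hval : ENNReal.ofReal (crossNorm ν ζ)
        ≤ ENNReal.ofReal (‖evalP P ζ‖ ^ (1 / ((1:ℕ) : ℝ))) := by
      apply ENNReal.ofReal_le_ofReal
      rw [show (1 / ((1:ℕ) : ℝ)) = 1 by norm_num, Real.rpow_one, hP, evalP_linP]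
      calc crossNorm ν ζ = u ζ := huζ.symm
        _ = (∑ i, bfun u i * ζ i).re := (key_re u ζ).symm
        _ ≤ ‖∑ i, bfun u i * ζ i‖ := Complex.re_le_norm _
    refine hval.trans ?_
    unfold siciak
    exact le_iSup_of_le P (le_iSup_of_le 1 (le_iSup_of_le (linP_homog _)
      (le_iSup_of_le le_rfl (le_iSup_of_le hbd le_rfl))))
  refine ⟨claim1, fun ζ hζex => ?_⟩
  obtain ⟨z, x, hζ⟩ := hζex
  refine le_antisymm (claim1 ζ) ?_
  unfold siciak
  refine iSup_le fun p => iSup_le fun k => iSup_le fun hhom => iSup_le fun hk =>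
    iSup_le fun hbd => ?_
  have hk0 : (k : ℝ) ≠ 0 := Nat.cast_ne_zero.mpr (by omega)
  rcases eq_or_ne (ν x) 0 with hx0 | hx0
  · have hx : x = 0 := hν3 x hx0
    have hζ0 : ζ = 0 := by rw [hζ, hx, toCn_zero, smul_zero]
    have hev : evalP p ζ = 0 := by
      rw [hζ0, show (0 : Cn n) = (0:ℂ) • (0 : Cn n) from (zero_smul ℂ _).symm,
        evalP_smul hhom, zero_pow (by omega : k ≠ 0), zero_mul]
    have hz0 : ‖evalP p ζ‖ ^ (1 / (k:ℝ)) = 0 := by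
      rw [hev, norm_zero, Real.zero_rpow (one_div_ne_zero hk0)]
    rw [hz0, ENNReal.ofReal_zero]
    exact zero_le
  · have hpos : 0 < ν x := lt_of_le_of_ne (nu_nonneg hν1 hν2 x) (Ne.symm hx0)
    set ξ0 : Rn n := (ν x)⁻¹ • x with hξ0def
    have hξ0 : ν ξ0 = 1 := by
      rw [hξ0def, hν1, abs_of_pos (inv_pos.mpr hpos), inv_mul_cancel₀ hx0]
    have htoCn : toCn ξ0 = ((ν x : ℂ))⁻¹ • toCn x := by
      rw [hξ0def, toCn_smul]
      norm_cast
    have hζ2 : ζ = (z * (ν x : ℂ)) • toCn ξ0 := by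
      rw [hζ, htoCn, smul_smul, mul_assoc,
        mul_inv_cancel₀ (Complex.ofReal_ne_zero.mpr hx0), mul_one]
    have hA : ‖evalP p (toCn ξ0)‖ ^ (1 / (k:ℝ)) ≤ 1 := by
      simpa using hbd (toCn ξ0) ⟨ξ0, hξ0, rfl⟩
    have habs : ‖evalP p ζ‖
        = (‖z‖ * ν x) ^ k * ‖evalP p (toCn ξ0)‖ := by
      rw [hζ2, evalP_smul hhom, norm_mul, norm_pow, norm_mul, Complex.norm_real, Real.norm_eq_abs,
        abs_of_pos hpos]
    have hBnn : (0:ℝ) ≤ ‖z‖ * ν x :=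
      mul_nonneg (norm_nonneg z) hpos.le
    have hr : ‖evalP p ζ‖ ^ (1 / (k:ℝ)) ≤ ‖z‖ * ν x := by
      rw [habs, Real.mul_rpow (pow_nonneg hBnn k) (norm_nonneg _), one_div,
        Real.pow_rpow_inv_natCast hBnn (by omega)]
      calc (‖z‖ * ν x) * ‖evalP p (toCn ξ0)‖ ^ ((k:ℝ)⁻¹)
          ≤ (‖z‖ * ν x) * 1 := by
            refine mul_le_mul_of_nonneg_left ?_ hBnn
            rw [← one_div]; exact hA
        _ = ‖z‖ * ν x := mul_one _
    refine ENNReal.ofReal_le_ofReal (hr.trans ?_)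
    rw [hζ]
    exact crossNorm_lower hν1 hν2 z x
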